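/- Let γ ∈ (0, √2) and let α be real with −γ < α < −γ/2. Then both of the following integrals converge absolutely and are equal: ∫_{−1}^{0} ∫_{0}^{1} |x₁|^{−γα/2 − 1} |x₂|^{−γα/2 − 1} |x₂ − x₁|^{−γ²/2} (1 − x₁)^{−1 + γ²/2 + γα/2} (1 − x₂)^{−1 + γ²/2 + γα/2} dx₁ dx₂ = 2^{γ²/2 + γα} · ∫_{0}^{1} ∫_{1}^{∞} |1 − t₁|^{−γα/2 − 1} |1 − t₂|^{−γα/2 − 1} |t₁ − t₂|^{−γ²/2} dt₁ dt₂. (The change of variables is the Möbius map x = (t−1)/(t+1).) -/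

import Mathlib

open MeasureTheory Set


open MeasureTheory Set

lemma eq_of_log_eq {x y : ℝ} (hx : 0 < x) (hy : 0 < y) (h : Real.log x = Real.log y) : x = y := by
  rw [← Real.exp_log hx, ← Real.exp_log hy, h]

lemma key_alg (γ α : ℝ) (X Y Z u v : ℝ) (hX : 0 < X) (hY : 0 < Y) (hZ : 0 < Z)
    (hu : 0 < u) (hv : 0 < v) :
    (2 / u ^ 2 * (2 / v ^ 2)) *
      ((X / u) ^ (-(γ * α) / 2 - 1) * ((Y / v) ^ (-(γ * α) / 2 - 1)) *
        ((2 * Z / (u * v)) ^ (-(γ ^ 2) / 2)) *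
        ((2 / u) ^ (-1 + γ ^ 2 / 2 + γ * α / 2)) *
        ((2 / v) ^ (-1 + γ ^ 2 / 2 + γ * α / 2))) =
      (2 : ℝ) ^ (γ ^ 2 / 2 + γ * α) *
        (X ^ (-(γ * α) / 2 - 1) * Y ^ (-(γ * α) / 2 - 1) * Z ^ (-(γ ^ 2) / 2)) := by
  have pXu : 0 < X / u := by positivity
  have pYv : 0 < Y / v := by positivity
  have pZuv : 0 < 2 * Z / (u * v) := by positivity
  have p2u : 0 < 2 / u := by positivity
  have p2v : 0 < 2 / v := by positivity
  have hne : ∀ x : ℝ, 0 < x → ∀ e : ℝ, x ^ e ≠ 0 := fun x hx e => (Real.rpow_pos_of_pos hx e).ne'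
  apply eq_of_log_eq (by positivity) (by positivity)
  rw [Real.log_mul (by positivity) (by positivity),
    Real.log_mul (by positivity) (by positivity),
    Real.log_mul (by positivity) (hne _ p2v _),
    Real.log_mul (by positivity) (hne _ p2u _),
    Real.log_mul (by positivity) (hne _ pZuv _),
    Real.log_mul (hne _ pXu _) (hne _ pYv _),
    Real.log_mul (by positivity) (by positivity),
    Real.log_mul (by positivity) (hne _ hZ _),
    Real.log_mul (hne _ hX _) (hne _ hY _),
    Real.log_rpow pXu, Real.log_rpow pYv, Real.log_rpow pZuv, Real.log_rpow p2u,
    Real.log_rpow p2v, Real.log_rpow hX, Real.log_rpow hY, Real.log_rpow hZ,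
    Real.log_rpow two_pos,
    Real.log_div two_ne_zero (by positivity), Real.log_div two_ne_zero (by positivity),
    Real.log_div hX.ne' hu.ne', Real.log_div hY.ne' hv.ne',
    Real.log_div (by positivity) (by positivity), Real.log_div two_ne_zero hu.ne',
    Real.log_div two_ne_zero hv.ne',
    Real.log_pow, Real.log_pow,
    Real.log_mul two_ne_zero hZ.ne', Real.log_mul hu.ne' hv.ne']
  ring

lemma clm_det_prodMap (c d : ℝ) :
    (((1 : ℝ →L[ℝ] ℝ).smulRight c).prodMap ((1 : ℝ →L[ℝ] ℝ).smulRight d)).det = c * d := by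
  have b : Module.Basis Unit ℝ ℝ := Module.Basis.singleton Unit ℝ
  rw [ContinuousLinearMap.det, ContinuousLinearMap.coe_prodMap,
    ← LinearMap.det_toMatrix (b.prod b), LinearMap.toMatrix_prodMap b b _ _,
    Matrix.det_fromBlocks_zero₁₂, LinearMap.det_toMatrix, LinearMap.det_toMatrix,
    ← ContinuousLinearMap.det, ← ContinuousLinearMap.det]
  exact congrArg₂ (· * ·) (ContinuousLinearMap.det_toSpanSingleton c) (ContinuousLinearMap.det_toSpanSingleton d)

open Set

noncomputable def mo (t : ℝ) : ℝ := (t - 1) / (t + 1)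

lemma mo_hasDerivAt {t : ℝ} (ht : -1 < t) : HasDerivAt mo (2 / (t + 1) ^ 2) t := by
  have h : t + 1 ≠ 0 := by linarith
  have := ((hasDerivAt_id t).sub_const 1).div ((hasDerivAt_id t).add_const 1) h
  rw [show (2 / (t + 1) ^ 2 : ℝ) = (1 * (id t + 1) - (id t - 1) * 1) / (id t + 1) ^ 2 by
    simp only [id]; ring]
  exact this

lemma mo_injOn : InjOn mo (Ioi (-1 : ℝ)) := by
  intro x hx y hy h
  simp only [mem_Ioi] at hx hy
  have hx1 : x + 1 ≠ 0 := by linarith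
  have hy1 : y + 1 ≠ 0 := by linarith
  unfold mo at h
  field_simp at h
  linarith

lemma mo_image_Ioo : mo '' Ioo (0 : ℝ) 1 = Ioo (-1 : ℝ) 0 := by
  ext x
  constructor
  · rintro ⟨t, ⟨ht0, ht1⟩, rfl⟩
    have h : (0:ℝ) < t + 1 := by linarith
    constructor
    · rw [mo, lt_div_iff₀ h]; linarith
    · exact div_neg_of_neg_of_pos (by linarith) h
  · rintro ⟨hx1, hx0⟩
    refine ⟨(1 + x) / (1 - x), ⟨?_, ?_⟩, ?_⟩
    · exact div_pos (by linarith) (by linarith)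
    · rw [div_lt_one (by linarith)]; linarith
    · have h1 : (1:ℝ) - x ≠ 0 := by linarith
      rw [mo]
      rw [div_eq_iff]
      · field_simp
        ring
      · have : (1 + x) / (1 - x) + 1 = 2 / (1 - x) := by field_simp; ring
        rw [this]
        positivity

lemma mo_image_Ioi : mo '' Ioi (1 : ℝ) = Ioo (0 : ℝ) 1 := by
  ext x
  constructor
  · rintro ⟨t, ht, rfl⟩
    simp only [mem_Ioi] at ht
    have h : (0:ℝ) < t + 1 := by linarith
    constructor
    · exact div_pos (by linarith) h
    · rw [mo, div_lt_one h]; linarith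
  · rintro ⟨hx0, hx1⟩
    refine ⟨(1 + x) / (1 - x), ?_, ?_⟩
    · rw [mem_Ioi, lt_div_iff₀ (by linarith)]; linarith
    · have h1 : (1:ℝ) - x ≠ 0 := by linarith
      rw [mo]
      rw [div_eq_iff]
      · field_simp
        ring
      · have : (1 + x) / (1 - x) + 1 = 2 / (1 - x) := by field_simp; ring
        rw [this]
        positivity

open MeasureTheory Set

lemma phi_integrable {P : ℝ} (hP : -1 < P) :
    IntegrableOn (fun t : ℝ => (1 - t) ^ P) (Ioo (0:ℝ) 1) := by
  have h := ((intervalIntegral.intervalIntegrable_rpow' hP (a := 0) (b := 1)).comp_sub_left 1).symm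
  norm_num at h
  rw [intervalIntegrable_iff_integrableOn_Ioo_of_le (by norm_num)] at h
  exact h

lemma psi_integrable {P Q : ℝ} (hP : -1 < P) (hQ : Q ≤ 0) (hPQ : P + Q < -1) :
    IntegrableOn (fun t : ℝ => (t - 1) ^ P * t ^ Q) (Ioi (1:ℝ)) := by
  have hmeas : Measurable (fun t : ℝ => (t - 1) ^ P * t ^ Q) := by fun_prop
  have h12 : IntegrableOn (fun t : ℝ => (t - 1) ^ P * t ^ Q) (Ioc 1 2) := by
    have hb := (intervalIntegral.intervalIntegrable_rpow' hP (a := 0) (b := 1)).comp_sub_right 1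
    norm_num at hb
    rw [intervalIntegrable_iff_integrableOn_Ioc_of_le (by norm_num)] at hb
    refine hb.mono' hmeas.aestronglyMeasurable ?_
    rw [ae_restrict_iff' measurableSet_Ioc]
    filter_upwards with t ht
    obtain ⟨ht1, ht2⟩ := ht
    have h1 : (0:ℝ) < t - 1 := by linarith
    have h0 : (0:ℝ) < t := by linarith
    rw [Real.norm_eq_abs, abs_of_nonneg (by positivity)]
    calc (t - 1) ^ P * t ^ Q ≤ (t - 1) ^ P * 1 :=
          mul_le_mul_of_nonneg_left
            (Real.rpow_le_one_of_one_le_of_nonpos (by linarith) hQ) (by positivity)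
      _ = (t - 1) ^ P := mul_one _
  have h2i : IntegrableOn (fun t : ℝ => (t - 1) ^ P * t ^ Q) (Ioi 2) := by
    have hb := (integrableOn_Ioi_rpow_of_lt hPQ (by norm_num : (0:ℝ) < 2)).const_mul
      (max 1 ((2:ℝ) ^ (-P)))
    refine hb.mono' hmeas.aestronglyMeasurable ?_
    rw [ae_restrict_iff' measurableSet_Ioi]
    filter_upwards with t ht
    rw [mem_Ioi] at ht
    have h0 : (0:ℝ) < t := by linarith
    have h1 : (0:ℝ) < t - 1 := by linarith
    have hth : t / 2 ≤ t - 1 := by linarith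
    rw [Real.norm_eq_abs, abs_of_nonneg (by positivity)]
    have hsplit : t ^ (P + Q) = t ^ P * t ^ Q := Real.rpow_add h0 P Q
    rcases le_or_gt 0 P with hP0 | hP0
    · have hle : (t - 1) ^ P ≤ t ^ P := Real.rpow_le_rpow h1.le (by linarith) hP0
      calc (t - 1) ^ P * t ^ Q ≤ t ^ P * t ^ Q :=
            mul_le_mul_of_nonneg_right hle (by positivity)
        _ = 1 * t ^ (P + Q) := by rw [hsplit]; ring
        _ ≤ max 1 ((2:ℝ) ^ (-P)) * t ^ (P + Q) :=
            mul_le_mul_of_nonneg_right (le_max_left _ _) (by positivity)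
    · have hle : (t - 1) ^ P ≤ (t / 2) ^ P :=
        Real.rpow_le_rpow_of_nonpos (by positivity) hth hP0.le
      have hdiv : (t / 2) ^ P = (2:ℝ) ^ (-P) * t ^ P := by
        rw [Real.div_rpow h0.le (by norm_num), Real.rpow_neg (by norm_num)]
        ring
      calc (t - 1) ^ P * t ^ Q ≤ (t / 2) ^ P * t ^ Q :=
            mul_le_mul_of_nonneg_right hle (by positivity)
        _ = (2:ℝ) ^ (-P) * t ^ (P + Q) := by rw [hdiv, hsplit]; ring
        _ ≤ max 1 ((2:ℝ) ^ (-P)) * t ^ (P + Q) :=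
            mul_le_mul_of_nonneg_right (le_max_right _ _) (by positivity)
  have : Ioc (1:ℝ) 2 ∪ Ioi 2 = Ioi 1 := Ioc_union_Ioi_eq_Ioi (by norm_num)
  rw [← this]
  exact h12.union h2i


noncomputable def lhsIntegrand (γ α : ℝ) (p : ℝ × ℝ) : ℝ :=
  |p.1| ^ (-(γ * α) / 2 - 1) * |p.2| ^ (-(γ * α) / 2 - 1) *
    |p.2 - p.1| ^ (-(γ ^ 2) / 2) *
    (1 - p.1) ^ (-1 + γ ^ 2 / 2 + γ * α / 2) *
    (1 - p.2) ^ (-1 + γ ^ 2 / 2 + γ * α / 2)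

noncomputable def rhsIntegrand (γ α : ℝ) (p : ℝ × ℝ) : ℝ :=
  |1 - p.1| ^ (-(γ * α) / 2 - 1) * |1 - p.2| ^ (-(γ * α) / 2 - 1) *
    |p.1 - p.2| ^ (-(γ ^ 2) / 2)

lemma split_alg (c : ℝ) (X Y Z : ℝ) (hX : 0 < X) (hY : 0 < Y) (hZ : 0 < Z) :
    (Y * X / 2 * Z) ^ c = (2:ℝ) ^ (-c) * (X ^ c * (Z ^ c * Y ^ c)) := by
  apply eq_of_log_eq (by positivity) (by positivity)
  rw [Real.log_rpow (by positivity), Real.log_mul (by positivity) hZ.ne',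
    Real.log_div (by positivity) two_ne_zero, Real.log_mul hY.ne' hX.ne',
    Real.log_mul (by positivity) (by positivity),
    Real.log_mul (by positivity) (by positivity),
    Real.log_rpow two_pos, Real.log_rpow hX,
    Real.log_mul (by positivity) (by positivity), Real.log_rpow hZ, Real.log_rpow hY]
  ring

lemma combine_alg (A Q c : ℝ) (X Y Z : ℝ) (hX : 0 < X) (hY : 0 < Y) :
    X ^ A * Y ^ A * (c * (X ^ Q * (Z ^ Q * Y ^ Q))) =
      c * (X ^ (A + Q) * (Y ^ (A + Q) * Z ^ Q)) := by
  rw [Real.rpow_add hX, Real.rpow_add hY]; ring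

lemma rhs_measurable (γ α : ℝ) : Measurable (rhsIntegrand γ α) := by
  unfold rhsIntegrand; fun_prop

theorem stmt7 (γ : ℝ) (hγ0 : 0 < γ) (hγ2 : γ < Real.sqrt 2)
    (α : ℝ) (hα1 : -γ < α) (hα2 : α < -γ / 2) :
    IntegrableOn (lhsIntegrand γ α) ((Ioo (-1 : ℝ) 0) ×ˢ (Ioo (0 : ℝ) 1)) volume ∧
    IntegrableOn (rhsIntegrand γ α) ((Ioo (0 : ℝ) 1) ×ˢ (Ioi (1 : ℝ))) volume ∧
    (∫ p in (Ioo (-1 : ℝ) 0) ×ˢ (Ioo (0 : ℝ) 1), lhsIntegrand γ α p) =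
      (2 : ℝ) ^ (γ ^ 2 / 2 + γ * α) *
        ∫ p in (Ioo (0 : ℝ) 1) ×ˢ (Ioi (1 : ℝ)), rhsIntegrand γ α p := by
  set A : ℝ := -(γ * α) / 2 - 1 with hA
  set B : ℝ := -(γ ^ 2) / 2 with hB
  set Q : ℝ := B / 2 with hQdef
  set P : ℝ := A + Q with hP
  have hγα1 : -(γ^2) < γ * α := by nlinarith
  have hγα2 : γ * α < -(γ^2) / 2 := by nlinarith
  have hPgt : -1 < P := by rw [hP, hA, hQdef, hB]; nlinarith
  have hQ : Q ≤ 0 := by rw [hQdef, hB]; nlinarith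
  have hPQ : P + Q < -1 := by rw [hP, hA, hQdef, hB]; nlinarith
  have hQeq : -Q = γ ^ 2 / 4 := by rw [hQdef, hB]; ring
  -- RHS integrability
  have hs : MeasurableSet ((Ioo (0:ℝ) 1) ×ˢ (Ioi (1:ℝ))) :=
    measurableSet_Ioo.prod measurableSet_Ioi
  have hprod : IntegrableOn
      (fun p : ℝ × ℝ => (1 - p.1) ^ P * ((p.2 - 1) ^ P * p.2 ^ Q))
      ((Ioo (0:ℝ) 1) ×ˢ (Ioi (1:ℝ))) volume := by
    rw [IntegrableOn, Measure.volume_eq_prod, ← Measure.prod_restrict]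
    exact (phi_integrable hPgt).mul_prod (psi_integrable hPgt hQ hPQ)
  have hrhsInt : IntegrableOn (rhsIntegrand γ α) ((Ioo (0:ℝ) 1) ×ˢ (Ioi (1:ℝ))) volume := by
    refine (hprod.const_mul ((2:ℝ) ^ (γ ^ 2 / 4))).mono'
      (rhs_measurable γ α).aestronglyMeasurable ?_
    rw [ae_restrict_iff' hs]
    filter_upwards with p hp
    obtain ⟨⟨h10, h11⟩, h2⟩ := hp
    have h1t : (0:ℝ) < 1 - p.1 := by linarith
    have h2t : (0:ℝ) < p.2 - 1 := by simp only [mem_Ioi] at h2; linarith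
    have h20 : (0:ℝ) < p.2 := by linarith
    have htt : (0:ℝ) < p.2 - p.1 := by linarith
    have erhs : rhsIntegrand γ α p =
        (1 - p.1) ^ A * (p.2 - 1) ^ A * (p.2 - p.1) ^ B := by
      rw [rhsIntegrand, abs_of_pos h1t, abs_of_neg (by linarith : 1 - p.2 < 0),
        abs_of_neg (by linarith : p.1 - p.2 < 0), neg_sub, neg_sub]
    rw [Real.norm_eq_abs, erhs, abs_of_nonneg (by positivity)]
    have hkey : (p.2 - p.1) ^ B ≤
        (2:ℝ) ^ (γ ^ 2 / 4) * ((1 - p.1) ^ Q * ((p.2) ^ Q * (p.2 - 1) ^ Q)) := by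
      have h_a : p.2 * (1 - p.1) / 2 ≤ p.2 - p.1 := by nlinarith [mul_pos h10 h2t]
      have h_b : p.2 - 1 ≤ p.2 - p.1 := by linarith
      have hsq : (p.2 * (1 - p.1) / 2) * (p.2 - 1) ≤ (p.2 - p.1) ^ 2 := by
        rw [pow_two]
        exact mul_le_mul h_a h_b h2t.le htt.le
      have h1 : (p.2 - p.1) ^ B = ((p.2 - p.1) ^ 2 : ℝ) ^ Q := by
        rw [← Real.rpow_two, ← Real.rpow_mul htt.le, hQdef]
        congr 1
        ring
      have h2' : ((p.2 - p.1) ^ 2 : ℝ) ^ Q ≤ ((p.2 * (1 - p.1) / 2) * (p.2 - 1)) ^ Q :=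
        Real.rpow_le_rpow_of_nonpos (by positivity) hsq hQ
      have h3 : ((p.2 * (1 - p.1) / 2) * (p.2 - 1)) ^ Q =
          (2:ℝ) ^ (-Q) * ((1 - p.1) ^ Q * ((p.2 - 1) ^ Q * (p.2) ^ Q)) :=
        split_alg Q (1 - p.1) p.2 (p.2 - 1) h1t h20 h2t
      rw [h1]
      refine h2'.trans (le_of_eq ?_)
      rw [h3, hQeq]
      ring
    calc (1 - p.1) ^ A * (p.2 - 1) ^ A * (p.2 - p.1) ^ B
        ≤ (1 - p.1) ^ A * (p.2 - 1) ^ A *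
            ((2:ℝ) ^ (γ ^ 2 / 4) * ((1 - p.1) ^ Q * ((p.2) ^ Q * (p.2 - 1) ^ Q))) :=
          mul_le_mul_of_nonneg_left hkey (by positivity)
      _ = (2:ℝ) ^ (γ ^ 2 / 4) * ((1 - p.1) ^ P * ((p.2 - 1) ^ P * p.2 ^ Q)) := by
          rw [hP]
          exact combine_alg A Q _ (1 - p.1) (p.2 - 1) p.2 h1t h2t
  -- change of variables
  set F : ℝ × ℝ → ℝ × ℝ := fun p => (mo p.1, mo p.2) with hF
  set F' : ℝ × ℝ → (ℝ × ℝ →L[ℝ] ℝ × ℝ) := fun p =>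
    ((1 : ℝ →L[ℝ] ℝ).smulRight (2 / (p.1 + 1) ^ 2)).prodMap
      ((1 : ℝ →L[ℝ] ℝ).smulRight (2 / (p.2 + 1) ^ 2)) with hF'def
  have hFderiv : ∀ p ∈ (Ioo (0:ℝ) 1) ×ˢ (Ioi (1:ℝ)),
      HasFDerivWithinAt F (F' p) ((Ioo (0:ℝ) 1) ×ˢ (Ioi (1:ℝ))) p := by
    rintro ⟨t₁, t₂⟩ ⟨⟨h10, h11⟩, h2⟩
    simp only [mem_Ioi] at h2
    have d1 := (mo_hasDerivAt (show (-1:ℝ) < t₁ by linarith)).hasFDerivAt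
    have d2 := (mo_hasDerivAt (show (-1:ℝ) < t₂ by linarith)).hasFDerivAt
    exact (d1.prodMap (t₁, t₂) d2).hasFDerivWithinAt
  have hinj : InjOn F ((Ioo (0:ℝ) 1) ×ˢ (Ioi (1:ℝ))) := by
    rintro ⟨x1, x2⟩ ⟨hx1, hx2⟩ ⟨y1, y2⟩ ⟨hy1, hy2⟩ h
    simp only [hF, Prod.mk.injEq] at h
    obtain ⟨hx1a, hx1b⟩ := hx1
    have := mo_injOn (show x1 ∈ Ioi (-1:ℝ) by simp only [mem_Ioi]; linarith)
      (show y1 ∈ Ioi (-1:ℝ) by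
        simp only [mem_Ioi]; have := hy1.1; linarith) h.1
    have := mo_injOn (show x2 ∈ Ioi (-1:ℝ) by
        simp only [mem_Ioi] at hx2 ⊢; linarith)
      (show y2 ∈ Ioi (-1:ℝ) by
        simp only [mem_Ioi] at hy2 ⊢; linarith) h.2
    simp_all
  have himg : F '' ((Ioo (0:ℝ) 1) ×ˢ (Ioi (1:ℝ))) = (Ioo (-1:ℝ) 0) ×ˢ (Ioo (0:ℝ) 1) := by
    rw [hF, ← prod_image_image_eq, mo_image_Ioo, mo_image_Ioi]
  have hkeyEq : ∀ p ∈ (Ioo (0:ℝ) 1) ×ˢ (Ioi (1:ℝ)),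
      |(F' p).det| • lhsIntegrand γ α (F p) =
        (2:ℝ) ^ (γ ^ 2 / 2 + γ * α) * rhsIntegrand γ α p := by
    rintro ⟨t₁, t₂⟩ ⟨⟨h10, h11⟩, h2⟩
    simp only [mem_Ioi] at h2
    have hu : (0:ℝ) < t₁ + 1 := by linarith
    have hv : (0:ℝ) < t₂ + 1 := by linarith
    have h1t : (0:ℝ) < 1 - t₁ := by linarith
    have h2t : (0:ℝ) < t₂ - 1 := by linarith
    have htt : (0:ℝ) < t₂ - t₁ := by linarith
    have hdet : (F' (t₁, t₂)).det = 2 / (t₁ + 1) ^ 2 * (2 / (t₂ + 1) ^ 2) := by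
      rw [hF'def]
      exact clm_det_prodMap _ _
    have e1 : |mo t₁| = (1 - t₁) / (t₁ + 1) := by
      rw [mo, abs_div, abs_of_pos hu, abs_of_neg (by linarith : t₁ - 1 < 0), neg_sub]
    have e2 : |mo t₂| = (t₂ - 1) / (t₂ + 1) := by
      rw [mo, abs_div, abs_of_pos hv, abs_of_pos (by linarith : (0:ℝ) < t₂ - 1)]
    have e3 : mo t₂ - mo t₁ = 2 * (t₂ - t₁) / ((t₁ + 1) * (t₂ + 1)) := by
      rw [mo, mo]; field_simp; ring
    have e4 : 1 - mo t₁ = 2 / (t₁ + 1) := by rw [mo]; field_simp; norm_num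
    have e5 : 1 - mo t₂ = 2 / (t₂ + 1) := by rw [mo]; field_simp; norm_num
    rw [hdet, abs_of_pos (by positivity), smul_eq_mul]
    have elhs : lhsIntegrand γ α (F (t₁, t₂)) =
        ((1 - t₁) / (t₁ + 1)) ^ A * (((t₂ - 1) / (t₂ + 1)) ^ A) *
          ((2 * (t₂ - t₁) / ((t₁ + 1) * (t₂ + 1))) ^ B) *
          ((2 / (t₁ + 1)) ^ (-1 + γ ^ 2 / 2 + γ * α / 2)) *
          ((2 / (t₂ + 1)) ^ (-1 + γ ^ 2 / 2 + γ * α / 2)) := by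
      rw [lhsIntegrand, hF]
      simp only
      rw [e1, e2, e3, e4, e5, abs_of_pos (show (0:ℝ) < 2 * (t₂ - t₁) / ((t₁ + 1) * (t₂ + 1)) by positivity)]
    have erhs : rhsIntegrand γ α (t₁, t₂) =
        (1 - t₁) ^ A * (t₂ - 1) ^ A * (t₂ - t₁) ^ B := by
      rw [rhsIntegrand]
      simp only
      rw [abs_of_pos h1t, abs_of_neg (by linarith : 1 - t₂ < 0),
        abs_of_neg (by linarith : t₁ - t₂ < 0), neg_sub, neg_sub]
    rw [elhs, erhs, hA, hB]
    have := key_alg γ α (1 - t₁) (t₂ - 1) (t₂ - t₁) (t₁ + 1) (t₂ + 1) h1t h2t htt hu hv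
    exact this
  -- conclude
  have hiff := integrableOn_image_iff_integrableOn_abs_det_fderiv_smul volume hs hFderiv hinj
    (lhsIntegrand γ α)
  rw [himg] at hiff
  have hlhsInt : IntegrableOn (lhsIntegrand γ α) ((Ioo (-1:ℝ) 0) ×ˢ (Ioo (0:ℝ) 1)) volume := by
    rw [hiff]
    exact IntegrableOn.congr_fun (Integrable.const_mul hrhsInt ((2:ℝ) ^ (γ ^ 2 / 2 + γ * α)))
      (fun p hp => (hkeyEq p hp).symm) hs
  refine ⟨hlhsInt, hrhsInt, ?_⟩
  have hint := integral_image_eq_integral_abs_det_fderiv_smul volume hs hFderiv hinj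
    (lhsIntegrand γ α)
  rw [himg] at hint
  rw [hint, setIntegral_congr_fun hs hkeyEq, integral_const_mul]
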